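/- arXiv:1711.03260 — 3 statements merged into one kernel-verified Lean document; each statement's English description precedes it below -/
import Mathlib

section
/- Suppose Assumption (R) holds. Then for every n ≥ 1 and every i = 1,…,d, the identity T̂^n 1_{Y_n ∩ A_i} = Σ_{k>n} T̂^k 1_{B_{i,k}} holds μ-a.e.; equivalently, for every nonnegative g ∈ L^∞(μ), ∫_{Y_n ∩ A_i} g(T^n x) dμ(x) = Σ_{k>n} ∫_{B_{i,k}} g(T^k x) dμ(x). -/
open MeasureTheory Filter Topology Set
open scoped ENNReal

noncomputable section

/-- Occupation time vector: `S_n(x) i = ∑_{k=1}^n 1_{A i}(T^k x)`. -/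
def occVec {X : Type*} (T : X → X) {ι : Type*} (A : ι → Set X) (n : ℕ) (x : X) :
    ι → ℝ :=
  fun i => ∑ k ∈ Finset.range n, (A i).indicator (fun _ => (1 : ℝ)) (T^[k + 1] x)

/-- `Y_k = {x : ψ(x) = k}` where `ψ(x) = min{k ≥ 0 : T^k x ∈ Y}`. -/
def Yray {X : Type*} (T : X → X) (Y : Set X) (k : ℕ) : Set X :=
  {x | T^[k] x ∈ Y ∧ ∀ j < k, T^[j] x ∉ Y}

/-- `B_{i,k}`: points of `Y` which stay in `Ai` at times `1, …, k-1` and return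
to `Y` at time `k`. -/
def Bray {X : Type*} (T : X → X) (Y Ai : Set X) (k : ℕ) : Set X :=
  {x | x ∈ Y ∧ (∀ j, 0 < j → j < k → T^[j] x ∈ Ai) ∧ T^[k] x ∈ Y}

/-- Wandering rate of `Y` starting from `B`: `∑_{k<n} μ(Y_k ∩ B)`
(for `B = A i` this is `w_i(n)`, for `B = univ` it is `w(n)`). -/
def wrate {X : Type*} [MeasurableSpace X] (μ : Measure X) (T : X → X) (Y B : Set X)
    (n : ℕ) : ℝ≥0∞ :=
  ∑ k ∈ Finset.range n, μ (Yray T Y k ∩ B)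

/-- `Q_i(s) = ∑_{n ≥ 0} e^{-ns} μ(Y_n ∩ A_i)`, a finite real number for `s > 0`. -/
def Qlap {X : Type*} [MeasurableSpace X] (μ : Measure X) (T : X → X) (Y B : Set X)
    (s : ℝ) : ℝ :=
  ∑' n : ℕ, Real.exp (-(n : ℝ) * s) * (μ (Yray T Y n ∩ B)).toReal

/-- `Y` dynamically separates the rays `A i`. -/
def DynSep {X : Type*} (T : X → X) (Y : Set X) {d : ℕ} (A : Fin d → Set X) : Prop :=
  ∀ x n i j, i ≠ j → x ∈ A i → T^[n] x ∈ A j → ∃ k, 0 < k ∧ k < n ∧ T^[k] x ∈ Y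

/-- Assumption (R). -/
structure RaySetting {X : Type*} [MeasurableSpace X] (μ : Measure X) (T : X → X)
    {d : ℕ} (Y : Set X) (A : Fin d → Set X) : Prop where
  d2 : 2 ≤ d
  sigmaFinite : SigmaFinite μ
  infiniteTotal : μ Set.univ = ⊤
  conservative : Conservative T μ
  ergodic : Ergodic T μ
  measY : MeasurableSet Y
  measA : ∀ i, MeasurableSet (A i)
  disjA : Pairwise (Function.onFun Disjoint A)
  disjYA : ∀ i, Disjoint Y (A i)
  cover : Y ∪ (⋃ i, A i) = Set.univ
  posY : 0 < μ Y
  finY : μ Y < ⊤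
  infA : ∀ i, μ (A i) = ⊤
  sep : DynSep T Y A

/-- `h` is a version of `T̂^k 1_B`, the `k`-th power of the dual operator applied
to the indicator of `B`. -/
def IsDualPowIndicator {X : Type*} [MeasurableSpace X] (μ : Measure X) (T : X → X)
    (B : Set X) (k : ℕ) (h : X → ℝ) : Prop :=
  Measurable h ∧ (∀ x, 0 ≤ h x) ∧ Integrable h μ ∧
    ∀ g : X → ℝ, Measurable g → (∃ C, ∀ x, |g x| ≤ C) →
      ∫ x, h x * g x ∂μ = ∫ x in B, g (T^[k] x) ∂μ

/-- Assumption (C): `hT k i` is a version of `T̂^k 1_{Y_k ∩ A_i}` and, for each `i`,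
the collection `{ w_i(n)⁻¹ ∑_{k<n} T̂^k 1_{Y_k ∩ A_i} : n ≥ 1 }` is strongly
precompact in `L¹(μ)`. -/
def AssumptionC {X : Type*} [MeasurableSpace X] (μ : Measure X) (T : X → X)
    {d : ℕ} (Y : Set X) (A : Fin d → Set X) (hT : ℕ → Fin d → X → ℝ) : Prop :=
  (∀ k i, IsDualPowIndicator μ T (Yray T Y k ∩ A i) k (hT k i)) ∧
    ∀ i, IsCompact (closure
      {f : Lp ℝ 1 μ | ∃ n, 1 ≤ n ∧
        (f : X → ℝ) =ᵐ[μ]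
          fun x => ((wrate μ T Y (A i) n).toReal)⁻¹ *
            ∑ k ∈ Finset.range n, hT k i x})

/-- A positive function is regularly varying of index `ρ` at `∞`. -/
def RegVarAtTop (f : ℝ → ℝ) (ρ : ℝ) : Prop :=
  (∀ᶠ x in atTop, 0 < f x) ∧
    ∀ r > 0, Tendsto (fun x => f (r * x) / f x) atTop (𝓝 (r ^ ρ))

/-- A positive sequence is regularly varying of index `ρ` at `∞`. -/
def RegVarSeq (a : ℕ → ℝ) (ρ : ℝ) : Prop :=
  RegVarAtTop (fun x => a ⌊x⌋₊) ρ

/-- A positive function is regularly varying of index `ρ` at `0+`. -/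
def RegVarAtZero (f : ℝ → ℝ) (ρ : ℝ) : Prop :=
  (∀ᶠ x in 𝓝[>] (0 : ℝ), 0 < f x) ∧
    ∀ r > 0, Tendsto (fun x => f (r * x) / f x) (𝓝[>] (0 : ℝ)) (𝓝 (r ^ ρ))

/-- Weak convergence of the pushforwards of `F n` under `ν` to the law of `ζ`. -/
def WeakConvTo {X : Type*} [MeasurableSpace X] (ν : Measure X) {E : Type*}
    [TopologicalSpace E] (F : ℕ → X → E) {Ω : Type*} [MeasurableSpace Ω]
    (P : Measure Ω) (ζ : Ω → E) : Prop :=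
  ∀ f : BoundedContinuousFunction E ℝ,
    Tendsto (fun n => ∫ x, f (F n x) ∂ν) atTop (𝓝 (∫ ω, f (ζ ω) ∂P))

/-- `ζ` has the generalized arcsine law `ζ_{α,β}`, characterized via the double
Laplace transform. -/
def HasArcsineLaw {Ω : Type*} [MeasurableSpace Ω] (P : Measure Ω) {ι : Type*}
    [Fintype ι] (ζ : Ω → ι → ℝ) (α : ℝ) (β : ι → ℝ) : Prop :=
  ∀ q > (0 : ℝ), ∀ lam : ι → ℝ, (∀ i, 0 ≤ lam i) →
    ∫ u in Ioi (0 : ℝ), Real.exp (-q * u) *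
        (∫ ω, Real.exp (-u * ∑ i, lam i * ζ ω i) ∂P)
      = (∑ i, β i * (q + lam i) ^ (-(1 - α))) / (∑ i, β i * (q + lam i) ^ α)

/-- `S̃_{λ,n,t} = exp(−λ·S_n/t)`. -/
def Stilde {X : Type*} (T : X → X) {ι : Type*} [Fintype ι] (A : ι → Set X)
    (lam : ι → ℝ) (n : ℕ) (t : ℝ) (x : X) : ℝ :=
  Real.exp (-(∑ i, lam i * occVec T A n x i) / t)

/-! ### The interval-map setting -/

/-- The Thaler interval-map setting: `T : [0,1] → [0,1]` with indifferent fixed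
points `xp 1 < ⋯ < xp d`, branch intervals `(a (i-1), a i)`, `C²` branch
extensions `Text i` and `C²` extensions `finv i` of the branch inverses. -/
structure ThalerMap (d : ℕ) (a : ℕ → ℝ) (xp : ℕ → ℝ) (T : ℝ → ℝ)
    (Text : ℕ → ℝ → ℝ) (finv : ℕ → ℝ → ℝ) : Prop where
  d2 : 2 ≤ d
  a0 : a 0 = 0
  ad : a d = 1
  xp1 : xp 1 = 0
  xpd : xp d = 1
  lt_left : ∀ i, 2 ≤ i → i ≤ d → a (i - 1) < xp i
  lt_right : ∀ i, 1 ≤ i → i ≤ d - 1 → xp i < a i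
  mapsTo : Set.MapsTo T (Icc 0 1) (Icc 0 1)
  ext_smooth : ∀ i, 1 ≤ i → i ≤ d → ContDiff ℝ 2 (Text i)
  ext_eq : ∀ i, 1 ≤ i → i ≤ d → EqOn (Text i) T (Ioo (a (i - 1)) (a i))
  dense_image : ∀ i, 1 ≤ i → i ≤ d → Icc (0 : ℝ) 1 ⊆ closure (T '' Ioo (a (i - 1)) (a i))
  fixed : ∀ i, 1 ≤ i → i ≤ d → T (xp i) = xp i ∧ Text i (xp i) = xp i
  deriv_one : ∀ i, 1 ≤ i → i ≤ d → deriv (Text i) (xp i) = 1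
  second_deriv_pos : ∀ i, 1 ≤ i → i ≤ d → ∀ x ∈ Ioo (a (i - 1)) (a i), x ≠ xp i →
    0 < (x - xp i) * iteratedDeriv 2 (Text i) x
  inv_smooth : ∀ i, 1 ≤ i → i ≤ d → ContDiff ℝ 2 (finv i)
  inv_eq : ∀ i, 1 ≤ i → i ≤ d → ∀ x ∈ Ioo (a (i - 1)) (a i), finv i (T x) = x
  inv_maps : ∀ i, 1 ≤ i → i ≤ d → MapsTo (finv i) (Icc 0 1) (Icc (a (i - 1)) (a i))

/-- The density `h(x) = h₀(x) ∏_i (x - x_i)/(x - f_i(x))` of the invariant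
measure with respect to Lebesgue measure. -/
def thalerDensity (d : ℕ) (xp : ℕ → ℝ) (finv : ℕ → ℝ → ℝ) (h0 : ℝ → ℝ) (x : ℝ) : ℝ :=
  h0 x * ∏ i ∈ Finset.Icc 1 d, ((x - xp i) / (x - finv i x))

/-- The invariant measure `μ = h · Leb|_{[0,1]}`. -/
def thalerMeasure (d : ℕ) (xp : ℕ → ℝ) (finv : ℕ → ℝ → ℝ) (h0 : ℝ → ℝ) :
    Measure ℝ :=
  (volume.restrict (Icc 0 1)).withDensity
    (fun x => ENNReal.ofReal (thalerDensity d xp finv h0 x))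

/-- The index set of the rays `(i, ±)`: `+` for `1 ≤ i ≤ d-1`, `−` for `2 ≤ i ≤ d`
(`true` encodes `+`, `false` encodes `−`); it has `2d - 2` elements. -/
def RayIdx (d : ℕ) :=
  {p : Fin (d + 1) × Bool //
    (p.2 = true ∧ 1 ≤ (p.1 : ℕ) ∧ (p.1 : ℕ) ≤ d - 1) ∨
    (p.2 = false ∧ 2 ≤ (p.1 : ℕ) ∧ (p.1 : ℕ) ≤ d)}

instance (d : ℕ) : Fintype (RayIdx d) := by
  unfold RayIdx; infer_instance

/-- The index `i` of a ray. -/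
def rayNum {d : ℕ} (k : RayIdx d) : ℕ := (k.1.1 : ℕ)

/-- The ray `A_i^± = (x_i, x_i + ε)` resp. `(x_i − ε, x_i)`. -/
def raySet {d : ℕ} (xp : ℕ → ℝ) (ε : ℝ) (k : RayIdx d) : Set ℝ :=
  if k.1.2 then Ioo (xp (rayNum k)) (xp (rayNum k) + ε)
  else Ioo (xp (rayNum k) - ε) (xp (rayNum k))

/-- `v_i = ∑_{j ≠ i} h(f_j(x_i)) f_j'(x_i)`. -/
def rayV (d : ℕ) (xp : ℕ → ℝ) (finv : ℕ → ℝ → ℝ) (h0 : ℝ → ℝ) (i : ℕ) : ℝ :=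
  ∑ j ∈ (Finset.Icc 1 d).erase i,
    thalerDensity d xp finv h0 (finv j (xp i)) * deriv (finv j) (xp i)

/-- `β_i^± = (c_i^±)^{−α} v_i / ∑_{j,±} (c_j^±)^{−α} v_j`, with `∞^{−α} = 0`. -/
def rayBeta (d : ℕ) (xp : ℕ → ℝ) (finv : ℕ → ℝ → ℝ) (h0 : ℝ → ℝ) (α : ℝ)
    (c : RayIdx d → ℝ≥0∞) (k : RayIdx d) : ℝ :=
  ((c k ^ (-α)).toReal * rayV d xp finv h0 (rayNum k)) /
    ∑ j, ((c j ^ (-α)).toReal * rayV d xp finv h0 (rayNum j))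

/-- The asymptotic relation `|Tx − x| / Ψ(|x − x_i|) → c_i^±` as `x → x_i ± 0`
(the limit being `+∞` when `c_i^± = ∞`). -/
def RegTLimit {d : ℕ} (T : ℝ → ℝ) (xp : ℕ → ℝ) (Ψ : ℝ → ℝ) (k : RayIdx d)
    (cv : ℝ≥0∞) : Prop :=
  Tendsto (fun x => ENNReal.ofReal (|T x - x| / Ψ |x - xp (rayNum k)|))
    (if k.1.2 then 𝓝[>] (xp (rayNum k)) else 𝓝[<] (xp (rayNum k))) (𝓝 cv)


/-- the identity `T̂ⁿ 1_{Yₙ ∩ Aᵢ} = ∑_{k>n} T̂ᵏ 1_{B_{i,k}}` μ-a.e.,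
in its equivalent integral form. -/
theorem stmt9
    {X : Type*} [MeasurableSpace X] (μ : Measure X) (T : X → X)
    {d : ℕ} (Y : Set X) (A : Fin d → Set X)
    (hR : RaySetting μ T Y A) :
    ∀ n, 1 ≤ n → ∀ i, ∀ g : X → ℝ≥0∞, Measurable g →
      (∃ C : ℝ≥0∞, C < ⊤ ∧ ∀ x, g x ≤ C) →
      ∫⁻ x in Yray T Y n ∩ A i, g (T^[n] x) ∂μ
        = ∑' j : ℕ, ∫⁻ x in Bray T Y (A i) (n + 1 + j), g (T^[n + 1 + j] x) ∂μ := by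
  intro n hn i g hg hC
  obtain ⟨C, hClt, hgC⟩ := hC
  have hmp : MeasurePreserving T μ μ := hR.ergodic.toMeasurePreserving
  have hTmeas : Measurable T := hmp.measurable
  have hIter : ∀ k : ℕ, Measurable (T^[k]) := fun k => hTmeas.iterate k
  have hmpI : ∀ k : ℕ, MeasurePreserving (T^[k]) μ μ := fun k => hmp.iterate k
  have hYA : ∀ j : Fin d, ∀ x, x ∈ A j → x ∉ Y := fun j x hx =>
    Set.disjoint_right.mp (hR.disjYA j) hx
  have hcover : ∀ x : X, x ∉ Y → ∃ j, x ∈ A j := by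
    intro x hx
    have hx' : x ∈ Y ∪ ⋃ j, A j := by rw [hR.cover]; exact Set.mem_univ x
    rcases hx' with h | h
    · exact absurd h hx
    · exact Set.mem_iUnion.mp h
  -- measurability of Yray
  have hYraymeas : ∀ k, MeasurableSet (Yray T Y k) := by
    intro k
    have hEq : Yray T Y k = (T^[k]) ⁻¹' Y ∩ ⋂ j ∈ Finset.range k, (T^[j]) ⁻¹' Yᶜ := by
      ext x
      simp only [Yray, Set.mem_setOf_eq, Set.mem_inter_iff, Set.mem_preimage,
        Set.mem_iInter, Finset.mem_range, Set.mem_compl_iff]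
    rw [hEq]
    exact ((hIter k) hR.measY).inter
      (Finset.measurableSet_biInter _ fun j _ => (hIter j) hR.measY.compl)
  have hYray0 : Yray T Y 0 = Y := by
    ext x; simp [Yray]
  have hYrayle : ∀ k, μ (Yray T Y k) ≤ μ Y := by
    intro k
    have hsub : Yray T Y k ⊆ (T^[k]) ⁻¹' Y := fun x hx => hx.1
    calc μ (Yray T Y k) ≤ μ ((T^[k]) ⁻¹' Y) := measure_mono hsub
      _ = μ Y := (hmpI k).measure_preimage hR.measY.nullMeasurableSet
  -- the sweeping sets U K
  set U : ℕ → Set X := fun K => ⋃ j ∈ Finset.Icc 1 K, (T^[j]) ⁻¹' Y with hUdef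
  have hUmem : ∀ K (x : X), x ∈ U K ↔ ∃ j, 1 ≤ j ∧ j ≤ K ∧ T^[j] x ∈ Y := by
    intro K x
    simp only [hUdef, Set.mem_iUnion, Set.mem_preimage, Finset.mem_Icc, exists_prop]
    constructor
    · rintro ⟨j, ⟨h1, h2⟩, h3⟩; exact ⟨j, h1, h2, h3⟩
    · rintro ⟨j, h1, h2, h3⟩; exact ⟨j, ⟨h1, h2⟩, h3⟩
  have hUmeas : ∀ K, MeasurableSet (U K) := by
    intro K; rw [hUdef]
    exact Finset.measurableSet_biUnion _ fun j _ => (hIter j) hR.measY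
  -- key identity for the wandering pieces
  have hkey : ∀ K, μ (Yray T Y K) + μ (Y ∩ U K) = μ Y := by
    intro K
    induction K with
    | zero =>
      have hU0 : U 0 = ∅ := by
        ext x
        simp only [hUmem, Set.mem_empty_iff_false, iff_false, not_exists]
        intro j hj; omega
      rw [hYray0, hU0]
      simp
    | succ K ih =>
      -- decomposition of the preimage of Yray K
      have hpre : T ⁻¹' (Yray T Y K) = Yray T Y (K + 1) ∪ (Y ∩ T ⁻¹' (Yray T Y K)) := by
        ext x
        constructor
        · intro hx
          by_cases hxY : x ∈ Y
          · exact Or.inr ⟨hxY, hx⟩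
          · left
            refine ⟨?_, ?_⟩
            · rw [Function.iterate_succ_apply]; exact hx.1
            · intro j hj
              cases j with
              | zero => simpa using hxY
              | succ j' =>
                rw [Function.iterate_succ_apply]
                exact hx.2 j' (by omega)
        · rintro (hx | hx)
          · refine ⟨?_, ?_⟩
            · rw [← Function.iterate_succ_apply]; exact hx.1
            · intro j hj
              rw [← Function.iterate_succ_apply]
              exact hx.2 (j + 1) (by omega)
          · exact hx.2
      have hdisj1 : Disjoint (Yray T Y (K + 1)) (Y ∩ T ⁻¹' (Yray T Y K)) := by
        rw [Set.disjoint_left]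
        intro x hx hx'
        exact (hx.2 0 (Nat.succ_pos K)) (by simpa using hx'.1)
      have hstep1 : μ (Yray T Y K) = μ (Yray T Y (K + 1)) + μ (Y ∩ T ⁻¹' (Yray T Y K)) := by
        calc μ (Yray T Y K) = μ (T ⁻¹' (Yray T Y K)) :=
              (hmp.measure_preimage (hYraymeas K).nullMeasurableSet).symm
          _ = μ (Yray T Y (K + 1) ∪ (Y ∩ T ⁻¹' (Yray T Y K))) := congrArg μ hpre
          _ = μ (Yray T Y (K + 1)) + μ (Y ∩ T ⁻¹' (Yray T Y K)) :=
              measure_union hdisj1 (hR.measY.inter (hTmeas (hYraymeas K)))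
      have hUsplit : Y ∩ U (K + 1) = (Y ∩ T ⁻¹' (Yray T Y K)) ∪ (Y ∩ U K) := by
        ext x
        constructor
        · rintro ⟨hxY, hxU⟩
          obtain ⟨j, hj1, hj2, hjY⟩ := (hUmem (K + 1) x).1 hxU
          by_cases hUK : x ∈ U K
          · exact Or.inr ⟨hxY, hUK⟩
          · left
            refine ⟨hxY, ?_, ?_⟩
            · rw [← Function.iterate_succ_apply]
              have hjeq : j = K + 1 := by
                by_contra hne
                exact hUK ((hUmem K x).2 ⟨j, hj1, by omega, hjY⟩)
              subst hjeq; exact hjY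
            · intro j' hj'
              rw [← Function.iterate_succ_apply]
              intro hYj'
              exact hUK ((hUmem K x).2 ⟨j' + 1, by omega, by omega, hYj'⟩)
        · rintro (⟨hxY, hx⟩ | ⟨hxY, hx⟩)
          · refine ⟨hxY, (hUmem (K + 1) x).2 ⟨K + 1, by omega, le_rfl, ?_⟩⟩
            rw [Function.iterate_succ_apply]; exact hx.1
          · refine ⟨hxY, (hUmem (K + 1) x).2 ?_⟩
            obtain ⟨j, h1, h2, h3⟩ := (hUmem K x).1 hx
            exact ⟨j, h1, by omega, h3⟩
      have hdisj2 : Disjoint (Y ∩ T ⁻¹' (Yray T Y K)) (Y ∩ U K) := by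
        rw [Set.disjoint_left]
        rintro x ⟨hxY, hx⟩ ⟨_, hxU⟩
        obtain ⟨j, h1, h2, h3⟩ := (hUmem K x).1 hxU
        have hnot : T^[j - 1] (T x) ∉ Y := hx.2 (j - 1) (by omega)
        rw [← Function.iterate_succ_apply] at hnot
        have hje : (j - 1).succ = j := by omega
        rw [hje] at hnot
        exact hnot h3
      have hstep2 : μ (Y ∩ U (K + 1)) = μ (Y ∩ T ⁻¹' (Yray T Y K)) + μ (Y ∩ U K) := by
        rw [hUsplit]
        exact measure_union hdisj2 (hR.measY.inter (hUmeas K))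
      calc μ (Yray T Y (K + 1)) + μ (Y ∩ U (K + 1))
          = μ (Yray T Y (K + 1)) + (μ (Y ∩ T ⁻¹' (Yray T Y K)) + μ (Y ∩ U K)) := by
            rw [hstep2]
        _ = (μ (Yray T Y (K + 1)) + μ (Y ∩ T ⁻¹' (Yray T Y K))) + μ (Y ∩ U K) :=
            (add_assoc _ _ _).symm
        _ = μ (Yray T Y K) + μ (Y ∩ U K) := by rw [← hstep1]
        _ = μ Y := ih
  -- μ (Yray K) → 0
  have hUmono : Monotone fun K => Y ∩ U K := by
    intro K L hKL x hx
    obtain ⟨hxY, hxU⟩ := hx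
    obtain ⟨j, h1, h2, h3⟩ := (hUmem K x).1 hxU
    exact ⟨hxY, (hUmem L x).2 ⟨j, h1, le_trans h2 hKL, h3⟩⟩
  have hconsv := hR.conservative.ae_mem_imp_frequently_image_mem hR.measY.nullMeasurableSet
  have hYsub : ∀ᵐ x ∂μ, x ∈ Y → x ∈ ⋃ K, (Y ∩ U K) := by
    filter_upwards [hconsv] with x hx hxY
    obtain ⟨m, hmY, hm1⟩ := ((hx hxY).and_eventually (eventually_ge_atTop 1)).exists
    exact Set.mem_iUnion.mpr ⟨m, hxY, (hUmem m x).2 ⟨m, hm1, le_rfl, hmY⟩⟩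
  have hUnionY : μ (⋃ K, (Y ∩ U K)) = μ Y := by
    apply le_antisymm
    · exact measure_mono (Set.iUnion_subset fun K => Set.inter_subset_left)
    · exact measure_mono_ae hYsub
  have hUlim : Tendsto (fun K => μ (Y ∩ U K)) atTop (𝓝 (μ Y)) := by
    have h1 := tendsto_measure_iUnion_atTop (μ := μ) hUmono
    rw [hUnionY] at h1
    exact h1
  have hYrayTend : Tendsto (fun K => μ (Yray T Y K)) atTop (𝓝 0) := by
    have heq : (fun K => μ (Yray T Y K)) = fun K => μ Y - μ (Y ∩ U K) := by
      funext K
      exact ENNReal.eq_sub_of_add_eq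
        (ne_of_lt (lt_of_le_of_lt (measure_mono Set.inter_subset_left) hR.finY))
        (hkey K)
    rw [heq]
    have h2 := ENNReal.Tendsto.sub
      (tendsto_const_nhds : Tendsto (fun _ : ℕ => μ Y) atTop (𝓝 (μ Y)))
      hUlim (Or.inl hR.finY.ne)
    simpa using h2
  -- the main construction
  set E : Set X := Yray T Y n ∩ A i with hEdef
  have hEmeas : MeasurableSet E := (hYraymeas n).inter (hR.measA i)
  set f : X → ℝ≥0∞ := E.indicator (fun x => g (T^[n] x)) with hfdef
  have hfmeas : Measurable f := (hg.comp (hIter n)).indicator hEmeas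
  have hfC : ∀ y, f y ≤ C := by
    intro y
    rw [hfdef]
    by_cases hy : y ∈ E
    · rw [Set.indicator_of_mem hy]; exact hgC _
    · rw [Set.indicator_of_notMem hy]; exact zero_le
  set P : ℕ → Set X := fun m => (⋂ r ∈ Finset.Ioo 0 m, (T^[r]) ⁻¹' (A i)) ∩ (T^[m]) ⁻¹' E
    with hPdef
  have hPmem : ∀ m (x : X), x ∈ P m ↔
      ((∀ r, 0 < r → r < m → T^[r] x ∈ A i) ∧ T^[m] x ∈ E) := by
    intro m x
    simp only [hPdef, Set.mem_inter_iff, Set.mem_iInter, Set.mem_preimage, Finset.mem_Ioo]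
    constructor
    · rintro ⟨h1, h2⟩; exact ⟨fun r hr hrm => h1 r ⟨hr, hrm⟩, h2⟩
    · rintro ⟨h1, h2⟩; exact ⟨fun r hr => h1 r hr.1 hr.2, h2⟩
  have hPmeas : ∀ m, MeasurableSet (P m) := by
    intro m
    rw [hPdef]
    exact (Finset.measurableSet_biInter _ fun r _ => (hIter r) (hR.measA i)).inter
      ((hIter m) hEmeas)
  -- the stay lemma
  have hstayA : ∀ (x : X) (s : ℕ), x ∈ A i → (∀ r, 0 < r → r ≤ s → T^[r] x ∉ Y) →
      ∀ r, r ≤ s → T^[r] x ∈ A i := by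
    intro x s hxA hnoY r hrs
    rcases Nat.eq_zero_or_pos r with rfl | hr
    · simpa using hxA
    · have hnY : T^[r] x ∉ Y := hnoY r hr hrs
      obtain ⟨j, hj⟩ := hcover _ hnY
      by_cases hij : j = i
      · rwa [hij] at hj
      · obtain ⟨k, hk0, hkr, hkY⟩ := hR.sep x r i j (fun h => hij h.symm) hxA hj
        exact absurd hkY (hnoY k hk0 (le_trans (le_of_lt hkr) hrs))
  -- Bray = Y ∩ P
  have hBrayP : ∀ j : ℕ, Bray T Y (A i) (n + 1 + j) = Y ∩ P (j + 1) := by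
    intro j
    ext x
    simp only [Bray, Set.mem_setOf_eq, Set.mem_inter_iff, hPmem]
    constructor
    · rintro ⟨hxY, hstp, hret⟩
      have hAi : T^[j + 1] x ∈ A i := hstp (j + 1) (by omega) (by omega)
      refine ⟨hxY, fun r hr0 hrj => hstp r hr0 (by omega), ⟨?_, ?_⟩, hAi⟩
      · rw [← Function.iterate_add_apply]
        have he : n + (j + 1) = n + 1 + j := by omega
        rw [he]; exact hret
      · intro j' hj'
        rw [← Function.iterate_add_apply]
        exact fun hY => (hYA i _ (hstp _ (by omega) (by omega))) hY
    · rintro ⟨hxY, hstp, hE'⟩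
      refine ⟨hxY, ?_, ?_⟩
      · intro r hr0 hrk
        rcases lt_trichotomy r (j + 1) with h | h | h
        · exact hstp r hr0 h
        · rw [h]; exact hE'.2
        · have hrw : T^[r] x = T^[r - (j + 1)] (T^[j + 1] x) := by
            conv_lhs => rw [show r = (r - (j + 1)) + (j + 1) from by omega]
            rw [Function.iterate_add_apply]
          rw [hrw]
          refine hstayA (T^[j + 1] x) (n - 1) hE'.2 ?_ _ (by omega)
          intro r' hr'0 hr's
          exact hE'.1.2 r' (by omega)
      · have hrw : T^[n + 1 + j] x = T^[n] (T^[j + 1] x) := by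
          conv_lhs => rw [show n + 1 + j = n + (j + 1) from by omega]
          rw [Function.iterate_add_apply]
        rw [hrw]; exact hE'.1.1
  -- P m avoids the other rays
  have hPnotA : ∀ m, 1 ≤ m → ∀ x, x ∈ P m → ∀ j' : Fin d, j' ≠ i → x ∉ A j' := by
    intro m hm x hxP j' hj' hxA
    have hTx : T^[1] x ∈ A i := by
      rcases eq_or_lt_of_le hm with h | h
      · have h2 := ((hPmem m x).1 hxP).2
        rw [hEdef] at h2
        have h3 := h2.2
        rw [← h] at h3
        exact h3
      · exact ((hPmem m x).1 hxP).1 1 one_pos h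
    obtain ⟨k, hk0, hk1, _⟩ := hR.sep x 1 j' i hj' hxA hTx
    omega
  have hPdecomp : ∀ m, 1 ≤ m → P m = (P m ∩ Y) ∪ (P m ∩ A i) := by
    intro m hm
    apply Set.Subset.antisymm
    · intro x hx
      by_cases hxY : x ∈ Y
      · exact Or.inl ⟨hx, hxY⟩
      · obtain ⟨j', hj'⟩ := hcover x hxY
        by_cases hij : j' = i
        · exact Or.inr ⟨hx, hij ▸ hj'⟩
        · exact absurd hj' (hPnotA m hm x hx j' hij)
    · rintro x (⟨h, _⟩ | ⟨h, _⟩) <;> exact h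
  have hPsucc : ∀ m, 1 ≤ m → T ⁻¹' (P m ∩ A i) = P (m + 1) := by
    intro m hm
    ext x
    simp only [Set.mem_preimage, Set.mem_inter_iff, hPmem]
    constructor
    · rintro ⟨⟨hst, hE'⟩, hTA⟩
      refine ⟨?_, ?_⟩
      · intro r hr0 hrm
        cases r with
        | zero => omega
        | succ r' =>
          rcases Nat.eq_zero_or_pos r' with rfl | hr'
          · rw [Function.iterate_one]; exact hTA
          · rw [Function.iterate_succ_apply]
            exact hst r' hr' (by omega)
      · rw [Function.iterate_succ_apply]; exact hE'
    · rintro ⟨hst, hE'⟩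
      have hTA : T x ∈ A i := by
        have h1 := hst 1 one_pos (by omega)
        rwa [Function.iterate_one] at h1
      refine ⟨⟨?_, ?_⟩, hTA⟩
      · intro r hr0 hrm
        have h1 := hst (r + 1) (by omega) (by omega)
        rwa [Function.iterate_succ_apply] at h1
      · rw [← Function.iterate_succ_apply]; exact hE'
  -- transfer of set-integrals under T
  have htrans : ∀ (S : Set X), MeasurableSet S → ∀ (h : X → ℝ≥0∞), Measurable h →
      ∫⁻ x in T ⁻¹' S, h (T x) ∂μ = ∫⁻ x in S, h x ∂μ := by
    intro S hS h hh
    rw [← lintegral_indicator hS, ← lintegral_indicator (hTmeas hS)]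
    have hind : ∀ x, (T ⁻¹' S).indicator (fun y => h (T y)) x = S.indicator h (T x) := by
      intro x
      by_cases hx : T x ∈ S
      · rw [Set.indicator_of_mem hx, Set.indicator_of_mem (by exact hx)]
      · rw [Set.indicator_of_notMem hx, Set.indicator_of_notMem (by exact hx)]
    rw [lintegral_congr hind]
    exact hmp.lintegral_comp (hh.indicator hS)
  -- the recursion step
  have hrec : ∀ m, 1 ≤ m → ∫⁻ x in P m, f (T^[m] x) ∂μ =
      (∫⁻ x in Y ∩ P m, f (T^[m] x) ∂μ) + ∫⁻ x in P (m + 1), f (T^[m + 1] x) ∂μ := by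
    intro m hm
    have hdisj : Disjoint (P m ∩ Y) (P m ∩ A i) :=
      (hR.disjYA i).mono Set.inter_subset_right Set.inter_subset_right
    have hAiPart : ∫⁻ x in P m ∩ A i, f (T^[m] x) ∂μ =
        ∫⁻ x in P (m + 1), f (T^[m + 1] x) ∂μ := by
      rw [← hPsucc m hm]
      have ht := htrans (P m ∩ A i) ((hPmeas m).inter (hR.measA i))
        (fun y => f (T^[m] y)) (hfmeas.comp (hIter m))
      rw [← ht]
      exact lintegral_congr fun x => by rw [Function.iterate_succ_apply]
    calc ∫⁻ x in P m, f (T^[m] x) ∂μ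
        = ∫⁻ x in (P m ∩ Y) ∪ (P m ∩ A i), f (T^[m] x) ∂μ := by rw [← hPdecomp m hm]
      _ = (∫⁻ x in P m ∩ Y, f (T^[m] x) ∂μ) + ∫⁻ x in P m ∩ A i, f (T^[m] x) ∂μ :=
          lintegral_union ((hPmeas m).inter (hR.measA i)) hdisj
      _ = (∫⁻ x in Y ∩ P m, f (T^[m] x) ∂μ) + ∫⁻ x in P (m + 1), f (T^[m + 1] x) ∂μ := by
          rw [Set.inter_comm, hAiPart]
  -- the base case
  have hP1 : P 1 = T ⁻¹' E := by
    ext x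
    rw [hPmem]
    constructor
    · rintro ⟨_, h2⟩
      rwa [Function.iterate_one] at h2
    · intro h
      exact ⟨fun r hr0 hr1 => absurd hr1 (by omega), by rwa [Function.iterate_one]⟩
  have hbase : ∫⁻ x in P 1, f (T^[1] x) ∂μ = ∫⁻ x in E, g (T^[n] x) ∂μ := by
    rw [hP1]
    simp only [Function.iterate_one]
    rw [htrans E hEmeas f hfmeas]
    apply setLIntegral_congr_fun hEmeas
    exact fun x hx => by rw [hfdef, Set.indicator_of_mem hx]
  -- the bound
  have hbound : ∀ m, 1 ≤ m →
      ∫⁻ x in P m, f (T^[m] x) ∂μ ≤ C * μ (Yray T Y (m + n - 1)) := by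
    intro m hm
    have hsub : P m ⊆ T ⁻¹' (Yray T Y (m + n - 1)) := by
      intro x hx
      obtain ⟨hst, hE'⟩ := (hPmem m x).1 hx
      refine ⟨?_, ?_⟩
      · rw [← Function.iterate_succ_apply]
        show T^[m + n - 1 + 1] x ∈ Y
        have he : m + n - 1 + 1 = n + m := by omega
        rw [he, Function.iterate_add_apply]
        exact hE'.1.1
      · intro j' hj'
        rw [← Function.iterate_succ_apply]
        show T^[j' + 1] x ∉ Y
        rcases lt_trichotomy (j' + 1) m with h | h | h
        · exact fun hY => hYA i _ (hst _ (by omega) h) hY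
        · rw [h]
          exact fun hY => hYA i _ hE'.2 hY
        · have hrw : T^[j' + 1] x = T^[j' + 1 - m] (T^[m] x) := by
            conv_lhs => rw [show j' + 1 = (j' + 1 - m) + m from by omega]
            rw [Function.iterate_add_apply]
          rw [hrw]
          exact hE'.1.2 (j' + 1 - m) (by omega)
    calc ∫⁻ x in P m, f (T^[m] x) ∂μ ≤ ∫⁻ _ in P m, C ∂μ :=
          lintegral_mono fun x => hfC _
      _ = C * μ (P m) := setLIntegral_const _ _
      _ ≤ C * μ (Yray T Y (m + n - 1)) := by
          apply mul_le_mul_right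
          calc μ (P m) ≤ μ (T ⁻¹' (Yray T Y (m + n - 1))) := measure_mono hsub
            _ = μ (Yray T Y (m + n - 1)) :=
                hmp.measure_preimage (hYraymeas _).nullMeasurableSet
  -- terms of the series
  have hterm : ∀ j : ℕ, ∫⁻ x in Bray T Y (A i) (n + 1 + j), g (T^[n + 1 + j] x) ∂μ =
      ∫⁻ x in Y ∩ P (j + 1), f (T^[j + 1] x) ∂μ := by
    intro j
    rw [hBrayP j]
    apply setLIntegral_congr_fun (hR.measY.inter (hPmeas (j + 1)))
    intro x hx
    have hE' : T^[j + 1] x ∈ E := ((hPmem _ x).1 hx.2).2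
    have he : n + 1 + j = n + (j + 1) := by omega
    beta_reduce
    rw [he, Function.iterate_add_apply, hfdef, Set.indicator_of_mem hE']
  -- telescoping
  have htel : ∀ M : ℕ,
      (∑ j ∈ Finset.range M, ∫⁻ x in Y ∩ P (j + 1), f (T^[j + 1] x) ∂μ) +
        (∫⁻ x in P (M + 1), f (T^[M + 1] x) ∂μ) = ∫⁻ x in P 1, f (T^[1] x) ∂μ := by
    intro M
    induction M with
    | zero => simp
    | succ M ih =>
      rw [Finset.sum_range_succ, add_assoc, ← hrec (M + 1) (by omega)]
      exact ih
  have hfin : ∀ M : ℕ, (∫⁻ x in P (M + 1), f (T^[M + 1] x) ∂μ) ≠ ∞ := by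
    intro M
    have h1 := hbound (M + 1) (by omega)
    have h2 : C * μ (Yray T Y (M + 1 + n - 1)) < ∞ :=
      ENNReal.mul_lt_top hClt (lt_of_le_of_lt (hYrayle _) hR.finY)
    exact (lt_of_le_of_lt h1 h2).ne
  have haTend : Tendsto (fun M => ∫⁻ x in P (M + 1), f (T^[M + 1] x) ∂μ)
      atTop (𝓝 0) := by
    have h0 : Tendsto (fun M : ℕ => μ (Yray T Y (M + 1 + n - 1))) atTop (𝓝 0) := by
      have h1 := hYrayTend.comp (tendsto_add_atTop_nat n)
      have he : (fun M : ℕ => μ (Yray T Y (M + 1 + n - 1))) =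
          fun M : ℕ => μ (Yray T Y (M + n)) := by
        funext M
        have : M + 1 + n - 1 = M + n := by omega
        rw [this]
      rw [he]
      exact h1
    have hub : Tendsto (fun M : ℕ => C * μ (Yray T Y (M + 1 + n - 1))) atTop (𝓝 0) := by
      have h2 := ENNReal.Tendsto.const_mul h0 (Or.inr hClt.ne)
      simpa using h2
    exact tendsto_of_tendsto_of_tendsto_of_le_of_le tendsto_const_nhds hub
      (fun M => zero_le) (fun M => hbound (M + 1) (by omega))
  have hSTend : Tendsto
      (fun M => ∑ j ∈ Finset.range M, ∫⁻ x in Y ∩ P (j + 1), f (T^[j + 1] x) ∂μ)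
      atTop (𝓝 (∫⁻ x in P 1, f (T^[1] x) ∂μ)) := by
    have he : (fun M => ∑ j ∈ Finset.range M, ∫⁻ x in Y ∩ P (j + 1), f (T^[j + 1] x) ∂μ) =
        fun M => (∫⁻ x in P 1, f (T^[1] x) ∂μ) - ∫⁻ x in P (M + 1), f (T^[M + 1] x) ∂μ := by
      funext M
      exact ENNReal.eq_sub_of_add_eq (hfin M) (htel M)
    rw [he]
    have h3 := ENNReal.Tendsto.sub
      (tendsto_const_nhds :
        Tendsto (fun _ : ℕ => ∫⁻ x in P 1, f (T^[1] x) ∂μ) atTop (𝓝 _))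
      haTend (Or.inr (by simp : (0 : ℝ≥0∞) ≠ ∞))
    simpa using h3
  -- conclusion
  rw [← hbase]
  rw [tsum_congr hterm]
  exact (tendsto_nhds_unique (ENNReal.tendsto_nat_tsum _) hSTend).symm

end
end

section
/- Suppose Assumption (R) holds. Then for every n ≥ 1 and every i = 1,…,d, μ(Y_n ∩ A_i) = Σ_{k>n} μ(B_{i,k}); equivalently, w_i(n+1) − w_i(n) = Σ_{k>n} μ(B_{i,k}), and consequently for every s > 0, Q_i(s) = Σ_{n≥1} e^{−ns} Σ_{k>n} μ(B_{i,k}). -/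
open MeasureTheory Filter Topology Set
open scoped ENNReal

noncomputable section

section Stmt10Aux

variable {X : Type*} [MeasurableSpace X] {μ : Measure X} {T : X → X} {Y : Set X}

private lemma yray_zero : Yray T Y 0 = Y := by
  ext x; simp [Yray]

private lemma measurableSet_yray (hT : Measurable T) (hY : MeasurableSet Y) (k : ℕ) :
    MeasurableSet (Yray T Y k) := by
  have h : Yray T Y k = (T^[k] ⁻¹' Y) ∩ ⋂ j, ⋂ _ : j < k, (T^[j] ⁻¹' Y)ᶜ := by
    ext x
    simp [Yray]
  rw [h]
  exact ((hT.iterate k) hY).inter (MeasurableSet.iInter fun j =>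
    MeasurableSet.iInter fun _ => ((hT.iterate j) hY).compl)

private lemma measurableSet_bray (hT : Measurable T) (hY : MeasurableSet Y)
    {Ai : Set X} (hA : MeasurableSet Ai) (k : ℕ) :
    MeasurableSet (Bray T Y Ai k) := by
  have h : Bray T Y Ai k =
      Y ∩ ((⋂ j, ⋂ _ : 0 < j, ⋂ _ : j < k, (T^[j] ⁻¹' Ai)) ∩ T^[k] ⁻¹' Y) := by
    ext x
    simp only [Bray, Set.mem_setOf_eq, Set.mem_inter_iff, Set.mem_iInter, Set.mem_preimage]
  rw [h]
  exact hY.inter ((MeasurableSet.iInter fun j => MeasurableSet.iInter fun _ =>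
    MeasurableSet.iInter fun _ => (hT.iterate j) hA).inter ((hT.iterate k) hY))

private lemma mem_yray_succ {n : ℕ} {x : X} (hx : x ∈ Yray T Y (n + 1)) :
    T x ∈ Yray T Y n := by
  obtain ⟨h1, h2⟩ := hx
  refine ⟨?_, fun j hj => ?_⟩
  · rw [← Function.iterate_succ_apply]; exact h1
  · rw [← Function.iterate_succ_apply]; exact h2 (j + 1) (by omega)

private lemma yray_succ_not_mem {n : ℕ} {x : X} (hx : x ∈ Yray T Y (n + 1)) : x ∉ Y := by
  simpa using hx.2 0 (by omega)

private lemma yray_pairwise_disjoint {m n : ℕ} (h : m ≠ n) :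
    Disjoint (Yray T Y m) (Yray T Y n) := by
  wlog hlt : m < n generalizing m n
  · exact (this h.symm (by omega)).symm
  · exact Set.disjoint_left.mpr fun x hx hx' => hx'.2 m hlt hx.1

private lemma preimage_yray (n : ℕ) :
    T ⁻¹' Yray T Y n = Yray T Y (n + 1) ∪ (Y ∩ T ⁻¹' Yray T Y n) := by
  ext x
  simp only [Set.mem_preimage, Set.mem_union, Set.mem_inter_iff]
  constructor
  · intro h
    by_cases hxY : x ∈ Y
    · exact Or.inr ⟨hxY, h⟩
    · refine Or.inl ⟨?_, fun j hj => ?_⟩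
      · rw [Function.iterate_succ_apply]; exact h.1
      · cases j with
        | zero => simpa using hxY
        | succ j => rw [Function.iterate_succ_apply]; exact h.2 j (by omega)
  · rintro (h | h)
    · exact mem_yray_succ h
    · exact h.2

private lemma measure_yray_succ (hpres : MeasurePreserving T μ μ) (hT : Measurable T)
    (hY : MeasurableSet Y) (n : ℕ) :
    μ (Yray T Y n) = μ (Yray T Y (n + 1)) + μ (Y ∩ T ⁻¹' Yray T Y n) := by
  have hdisj : Disjoint (Yray T Y (n + 1)) (Y ∩ T ⁻¹' Yray T Y n) :=
    Set.disjoint_left.mpr fun x hx hx' => yray_succ_not_mem hx hx'.1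
  calc μ (Yray T Y n) = μ (T ⁻¹' Yray T Y n) :=
        (hpres.measure_preimage (measurableSet_yray hT hY n).nullMeasurableSet).symm
    _ = μ (Yray T Y (n + 1) ∪ (Y ∩ T ⁻¹' Yray T Y n)) := congrArg μ (preimage_yray n)
    _ = _ := measure_union hdisj (hY.inter (hT (measurableSet_yray hT hY n)))

private lemma yray_antitone (hpres : MeasurePreserving T μ μ) (hT : Measurable T)
    (hY : MeasurableSet Y) : Antitone fun n => μ (Yray T Y n) := by
  refine antitone_nat_of_succ_le fun n => ?_
  rw [measure_yray_succ hpres hT hY n]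
  exact le_self_add

private lemma measure_yray_le (hpres : MeasurePreserving T μ μ) (hT : Measurable T)
    (hY : MeasurableSet Y) (n : ℕ) : μ (Yray T Y n) ≤ μ Y := by
  simpa [yray_zero] using yray_antitone hpres hT hY (Nat.zero_le n)

private lemma measure_eq_yray_add (hpres : MeasurePreserving T μ μ) (hT : Measurable T)
    (hY : MeasurableSet Y) (n : ℕ) :
    μ Y = μ (Yray T Y n) + ∑ k ∈ Finset.range n, μ (Y ∩ T ⁻¹' Yray T Y k) := by
  induction n with
  | zero => simp [yray_zero]
  | succ n ih =>
    rw [Finset.sum_range_succ]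
    calc μ Y = μ (Yray T Y n) + ∑ k ∈ Finset.range n, μ (Y ∩ T ⁻¹' Yray T Y k) := ih
      _ = (μ (Yray T Y (n + 1)) + μ (Y ∩ T ⁻¹' Yray T Y n))
            + ∑ k ∈ Finset.range n, μ (Y ∩ T ⁻¹' Yray T Y k) := by
          rw [← measure_yray_succ hpres hT hY n]
      _ = μ (Yray T Y (n + 1))
            + (∑ k ∈ Finset.range n, μ (Y ∩ T ⁻¹' Yray T Y k) + μ (Y ∩ T ⁻¹' Yray T Y n)) := by
          ring

private lemma tsum_return (hcons : Conservative T μ) (hT : Measurable T)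
    (hY : MeasurableSet Y) :
    ∑' n : ℕ, μ (Y ∩ T ⁻¹' Yray T Y n) = μ Y := by
  classical
  have hmeas : ∀ n : ℕ, MeasurableSet (Y ∩ T ⁻¹' Yray T Y n) := fun n =>
    hY.inter (hT (measurableSet_yray hT hY n))
  have hdisj : Pairwise (Function.onFun Disjoint fun n => Y ∩ T ⁻¹' Yray T Y n) := by
    intro m n hmn
    exact (Set.disjoint_left.mpr fun x hx hx' =>
      Set.disjoint_left.mp (yray_pairwise_disjoint hmn) hx.2 hx'.2)
  rw [← measure_iUnion hdisj hmeas]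
  set U := ⋃ n, Y ∩ T ⁻¹' Yray T Y n with hU
  have hsub : U ⊆ Y := Set.iUnion_subset fun n => Set.inter_subset_left
  have hnull : μ (Y \ U) = 0 := by
    rw [measure_eq_zero_iff_ae_notMem]
    filter_upwards [hcons.ae_mem_imp_frequently_image_mem hY.nullMeasurableSet] with x hx
    intro hmem
    obtain ⟨n, hnY, hn1⟩ := ((hx hmem.1).and_eventually (Filter.eventually_ge_atTop 1)).exists
    have hex : ∃ k, T^[k + 1] x ∈ Y := ⟨n - 1, by rwa [show n - 1 + 1 = n by omega]⟩
    refine hmem.2 (Set.mem_iUnion.2 ⟨Nat.find hex, hmem.1, ?_, fun j hj => ?_⟩)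
    · rw [← Function.iterate_succ_apply]
      exact Nat.find_spec hex
    · rw [← Function.iterate_succ_apply]
      exact Nat.find_min hex hj
  refine le_antisymm (measure_mono hsub) ?_
  calc μ Y = μ (U ∪ Y \ U) := by rw [Set.union_diff_cancel hsub]
    _ ≤ μ U + μ (Y \ U) := measure_union_le _ _
    _ = μ U := by rw [hnull, add_zero]

private lemma tendsto_measure_yray (hcons : Conservative T μ)
    (hpres : MeasurePreserving T μ μ) (hT : Measurable T)
    (hY : MeasurableSet Y) (hYfin : μ Y ≠ ∞) :
    Tendsto (fun n => μ (Yray T Y n)) atTop (𝓝 0) := by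
  have hS : Tendsto (fun n => ∑ k ∈ Finset.range n, μ (Y ∩ T ⁻¹' Yray T Y k)) atTop
      (𝓝 (μ Y)) := by
    have := ENNReal.tendsto_nat_tsum (fun k => μ (Y ∩ T ⁻¹' Yray T Y k))
    rwa [tsum_return hcons hT hY] at this
  have heq : ∀ n, μ (Yray T Y n) = μ Y - ∑ k ∈ Finset.range n, μ (Y ∩ T ⁻¹' Yray T Y k) := by
    intro n
    have h := measure_eq_yray_add hpres hT hY n
    refine ENNReal.eq_sub_of_add_eq (fun hinf => hYfin ?_) h.symm
    rw [h, hinf, add_top]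
  have : Tendsto (fun n => μ Y - ∑ k ∈ Finset.range n, μ (Y ∩ T ⁻¹' Yray T Y k)) atTop
      (𝓝 (μ Y - μ Y)) :=
    ENNReal.Tendsto.sub tendsto_const_nhds hS (Or.inl hYfin)
  rw [tsub_self] at this
  exact (tendsto_congr heq).mpr this

private lemma chain {d : ℕ} {A : Fin d → Set X} (hsep : DynSep T Y A)
    (hcov : ∀ x, x ∉ Y → ∃ j, x ∈ A j) {i : Fin d} {x : X} (hx : x ∈ A i) {m : ℕ}
    (hnot : ∀ k, 0 < k → k ≤ m → T^[k] x ∉ Y) : ∀ k ≤ m, T^[k] x ∈ A i := by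
  intro k hk
  rcases Nat.eq_zero_or_pos k with rfl | hk0
  · simpa using hx
  obtain ⟨j, hj⟩ := hcov _ (hnot k hk0 hk)
  rcases eq_or_ne j i with rfl | hne
  · exact hj
  obtain ⟨l, hl0, hlk, hlY⟩ := hsep x k i j (Ne.symm hne) hx hj
  exact absurd hlY (hnot l hl0 (by omega))

private lemma preimage_yray_inter {d : ℕ} {A : Fin d → Set X} (hsep : DynSep T Y A)
    (hcov : ∀ x, x ∉ Y → ∃ j, x ∈ A j) (hdisjYA : ∀ j, Disjoint Y (A j)) (i : Fin d)
    {n : ℕ} (hn : 1 ≤ n) :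
    T ⁻¹' (Yray T Y n ∩ A i) = Yray T Y (n + 1) ∩ A i ∪ Bray T Y (A i) (n + 1) := by
  ext x
  simp only [Set.mem_preimage, Set.mem_inter_iff, Set.mem_union]
  constructor
  · rintro ⟨hYr, hAi⟩
    by_cases hxY : x ∈ Y
    · right
      have hch := chain hsep hcov hAi (m := n - 1)
        (fun k hk0 hkm => hYr.2 k (by omega))
      refine ⟨hxY, fun j hj0 hjn => ?_, ?_⟩
      · have hj' : j = (j - 1) + 1 := by omega
        rw [hj', Function.iterate_succ_apply]
        exact hch (j - 1) (by omega)
      · rw [Function.iterate_succ_apply]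
        exact hYr.1
    · left
      obtain ⟨l, hl⟩ := hcov x hxY
      have hxAi : x ∈ A i := by
        rcases eq_or_ne l i with rfl | hne
        · exact hl
        · obtain ⟨k, hk0, hk1, _⟩ := hsep x 1 l i hne hl (by simpa using hAi)
          omega
      refine ⟨⟨?_, fun j hj => ?_⟩, hxAi⟩
      · rw [Function.iterate_succ_apply]; exact hYr.1
      · cases j with
        | zero => simpa using hxY
        | succ j => rw [Function.iterate_succ_apply]; exact hYr.2 j (by omega)
  · rintro (⟨hYr, hAi⟩ | ⟨hxY, hmid, hret⟩)
    · refine ⟨mem_yray_succ hYr, ?_⟩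
      have hch := chain hsep hcov hAi (m := n)
        (fun k hk0 hkm => hYr.2 k (by omega))
      simpa using hch 1 hn
    · constructor
      · refine ⟨?_, fun j hj => ?_⟩
        · rw [← Function.iterate_succ_apply]; exact hret
        · rw [← Function.iterate_succ_apply]
          exact Set.disjoint_left.mp (hdisjYA i).symm (hmid (j + 1) (by omega) (by omega))
      · simpa using hmid 1 (by omega) (by omega)

private lemma measure_yray_inter_succ (hpres : MeasurePreserving T μ μ) (hT : Measurable T)
    (hY : MeasurableSet Y) {d : ℕ} {A : Fin d → Set X} (hsep : DynSep T Y A)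
    (hcov : ∀ x, x ∉ Y → ∃ j, x ∈ A j) (hdisjYA : ∀ j, Disjoint Y (A j))
    (hAmeas : ∀ j, MeasurableSet (A j)) (i : Fin d) {n : ℕ} (hn : 1 ≤ n) :
    μ (Yray T Y n ∩ A i)
      = μ (Bray T Y (A i) (n + 1)) + μ (Yray T Y (n + 1) ∩ A i) := by
  rw [← hpres.measure_preimage ((measurableSet_yray hT hY n).inter (hAmeas i)).nullMeasurableSet,
    preimage_yray_inter hsep hcov hdisjYA i hn,
    measure_union _ (measurableSet_bray hT hY (hAmeas i) (n + 1)), add_comm]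
  exact Set.disjoint_left.mpr fun x hx hx' => yray_succ_not_mem hx.1 hx'.1

private lemma measure_yray_inter_eq (hpres : MeasurePreserving T μ μ) (hT : Measurable T)
    (hY : MeasurableSet Y) {d : ℕ} {A : Fin d → Set X} (hsep : DynSep T Y A)
    (hcov : ∀ x, x ∉ Y → ∃ j, x ∈ A j) (hdisjYA : ∀ j, Disjoint Y (A j))
    (hAmeas : ∀ j, MeasurableSet (A j)) (i : Fin d) {n : ℕ} (hn : 1 ≤ n) (m : ℕ) :
    μ (Yray T Y n ∩ A i)
      = (∑ j ∈ Finset.range m, μ (Bray T Y (A i) (n + 1 + j)))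
        + μ (Yray T Y (n + m) ∩ A i) := by
  induction m with
  | zero => simp
  | succ m ih =>
    rw [Finset.sum_range_succ, show n + 1 + m = n + m + 1 by omega, ih,
      measure_yray_inter_succ hpres hT hY hsep hcov hdisjYA hAmeas i
        (show 1 ≤ n + m by omega), ← add_assoc]
    rfl

private lemma measure_yray_inter_eq_tsum (hcons : Conservative T μ)
    (hpres : MeasurePreserving T μ μ) (hT : Measurable T)
    (hY : MeasurableSet Y) (hYfin : μ Y ≠ ∞) {d : ℕ} {A : Fin d → Set X}
    (hsep : DynSep T Y A) (hcov : ∀ x, x ∉ Y → ∃ j, x ∈ A j)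
    (hdisjYA : ∀ j, Disjoint Y (A j)) (hAmeas : ∀ j, MeasurableSet (A j))
    (i : Fin d) {n : ℕ} (hn : 1 ≤ n) :
    μ (Yray T Y n ∩ A i) = ∑' j : ℕ, μ (Bray T Y (A i) (n + 1 + j)) := by
  have h0 : Tendsto (fun m => μ (Yray T Y (n + m) ∩ A i)) atTop (𝓝 0) := by
    refine tendsto_of_tendsto_of_tendsto_of_le_of_le tendsto_const_nhds
      (tendsto_measure_yray hcons hpres hT hY hYfin) (fun m => zero_le) (fun m => ?_)
    exact le_trans (measure_mono Set.inter_subset_left)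
      (yray_antitone hpres hT hY (Nat.le_add_left m n))
  have h1 : Tendsto (fun m => (∑ j ∈ Finset.range m, μ (Bray T Y (A i) (n + 1 + j)))
        + μ (Yray T Y (n + m) ∩ A i)) atTop
      (𝓝 ((∑' j : ℕ, μ (Bray T Y (A i) (n + 1 + j))) + 0)) :=
    (ENNReal.tendsto_nat_tsum _).add h0
  rw [add_zero] at h1
  have h2 : (fun m => (∑ j ∈ Finset.range m, μ (Bray T Y (A i) (n + 1 + j)))
        + μ (Yray T Y (n + m) ∩ A i)) = fun _ => μ (Yray T Y n ∩ A i) :=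
    funext fun m =>
      (measure_yray_inter_eq hpres hT hY hsep hcov hdisjYA hAmeas i hn m).symm
  rw [h2] at h1
  exact tendsto_nhds_unique tendsto_const_nhds h1

end Stmt10Aux

/-- `μ(Yₙ ∩ Aᵢ) = ∑_{k>n} μ(B_{i,k})`, equivalently
`wᵢ(n+1) − wᵢ(n) = ∑_{k>n} μ(B_{i,k})`, and the resulting formula for `Qᵢ`. -/
theorem stmt10
    {X : Type*} [MeasurableSpace X] (μ : Measure X) (T : X → X)
    {d : ℕ} (Y : Set X) (A : Fin d → Set X)
    (hR : RaySetting μ T Y A) :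
    ∀ i, (∀ n, 1 ≤ n →
        μ (Yray T Y n ∩ A i) = (∑' j : ℕ, μ (Bray T Y (A i) (n + 1 + j))) ∧
        wrate μ T Y (A i) (n + 1) - wrate μ T Y (A i) n
          = ∑' j : ℕ, μ (Bray T Y (A i) (n + 1 + j))) ∧
      ∀ s > (0 : ℝ),
        ENNReal.ofReal (Qlap μ T Y (A i) s)
          = ∑' n : ℕ, ENNReal.ofReal (Real.exp (-((n : ℝ) + 1) * s)) *
              ∑' j : ℕ, μ (Bray T Y (A i) (n + 2 + j)) := by
  intro i
  have hpres : MeasurePreserving T μ μ := hR.ergodic.toMeasurePreserving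
  have hT : Measurable T := hpres.measurable
  have hY := hR.measY
  have hYfin : μ Y ≠ ∞ := hR.finY.ne
  have hcov : ∀ x, x ∉ Y → ∃ j, x ∈ A j := by
    intro x hx
    have hx' : x ∈ Set.univ := Set.mem_univ x
    rw [← hR.cover] at hx'
    rcases hx' with h | h
    · exact absurd h hx
    · exact Set.mem_iUnion.mp h
  have key : ∀ n : ℕ, 1 ≤ n →
      μ (Yray T Y n ∩ A i) = ∑' j : ℕ, μ (Bray T Y (A i) (n + 1 + j)) := fun n hn =>
    measure_yray_inter_eq_tsum hR.conservative hpres hT hY hYfin hR.sep hcov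
      hR.disjYA hR.measA i hn
  have hfinI : ∀ n, μ (Yray T Y n ∩ A i) ≠ ∞ := fun n =>
    (lt_of_le_of_lt (le_trans (measure_mono Set.inter_subset_left)
      (measure_yray_le hpres hT hY n)) hR.finY).ne
  refine ⟨fun n hn => ⟨key n hn, ?_⟩, ?_⟩
  · have hw : wrate μ T Y (A i) (n + 1)
        = wrate μ T Y (A i) n + μ (Yray T Y n ∩ A i) := Finset.sum_range_succ _ _
    have hwfin : wrate μ T Y (A i) n ≠ ∞ := by
      refine (ENNReal.sum_lt_top.mpr fun k _ => ?_).ne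
      exact (hfinI k).lt_top
    rw [hw, ENNReal.add_sub_cancel_left hwfin, key n hn]
  · intro s hs
    set F : ℕ → ℝ := fun n => Real.exp (-(n : ℝ) * s) * (μ (Yray T Y n ∩ A i)).toReal with hF
    have hFnn : ∀ n, 0 ≤ F n := fun n =>
      mul_nonneg (Real.exp_pos _).le ENNReal.toReal_nonneg
    have hsum : Summable F := by
      refine Summable.of_nonneg_of_le hFnn (fun n => ?_)
        (((summable_geometric_of_lt_one (Real.exp_nonneg (-s))
          (Real.exp_lt_one_iff.mpr (by linarith))).mul_right ((μ Y).toReal)))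
      have hbd : (μ (Yray T Y n ∩ A i)).toReal ≤ (μ Y).toReal :=
        ENNReal.toReal_mono hYfin
          (le_trans (measure_mono Set.inter_subset_left) (measure_yray_le hpres hT hY n))
      calc F n ≤ Real.exp (-(n : ℝ) * s) * (μ Y).toReal :=
            mul_le_mul_of_nonneg_left hbd (Real.exp_pos _).le
        _ = Real.exp (-s) ^ n * (μ Y).toReal := by
            rw [show -(n : ℝ) * s = (n : ℝ) * (-s) by ring, Real.exp_nat_mul]
    have h1 : ENNReal.ofReal (Qlap μ T Y (A i) s) = ∑' n : ℕ, ENNReal.ofReal (F n) :=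
      ENNReal.ofReal_tsum_of_nonneg hFnn hsum
    have h2 : ∀ n, ENNReal.ofReal (F n)
        = ENNReal.ofReal (Real.exp (-(n : ℝ) * s)) * μ (Yray T Y n ∩ A i) := fun n => by
      rw [hF, ENNReal.ofReal_mul (Real.exp_pos _).le, ENNReal.ofReal_toReal (hfinI n)]
    rw [h1, tsum_congr h2, tsum_eq_zero_add' ENNReal.summable]
    have hzero : μ (Yray T Y 0 ∩ A i) = 0 := by
      rw [yray_zero, (hR.disjYA i).inter_eq, measure_empty]
    rw [hzero, mul_zero, zero_add]
    refine tsum_congr fun n => ?_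
    rw [key (n + 1) (by omega)]
    have he : ∀ j : ℕ, n + 1 + 1 + j = n + 2 + j := fun j => by omega
    simp_rw [he, Nat.cast_add, Nat.cast_one]


end
end

section
/- Suppose Assumption (R) holds and fix λ ∈ [0,∞)^d. Then for every probability measure ν ≪ μ and every ε > 0, ν{x ∈ X : sup_{t>0} |S̃_{λ,n,t}(Tx) − S̃_{λ,n,t}(x)| > ε} → 0 as n → ∞. -/
open MeasureTheory Filter Topology Set
open scoped ENNReal

noncomputable section

/-- Key elementary estimate: for `0 < a ≤ b` and `t > 0`,
`|e^{-b/t} - e^{-a/t}| ≤ (b - a)/a`. -/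
lemma stmt18_exp_diff_le {a b t : ℝ} (ha : 0 < a) (hab : a ≤ b) (ht : 0 < t) :
    |Real.exp (-b / t) - Real.exp (-a / t)| ≤ (b - a) / a := by
  have hle : Real.exp (-b / t) ≤ Real.exp (-a / t) := by
    apply Real.exp_le_exp.mpr
    exact div_le_div_of_nonneg_right (by linarith) ht.le
  rw [abs_of_nonpos (by linarith), neg_sub]
  have hsplit : Real.exp (-b / t) = Real.exp (-a / t) * Real.exp (-((b - a) / t)) := by
    rw [← Real.exp_add]; ring_nf
  have h2 : 1 - Real.exp (-((b - a) / t)) ≤ (b - a) / t := by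
    have := Real.add_one_le_exp (-((b - a) / t)); linarith
  have h3 : 0 < Real.exp (-a / t) := Real.exp_pos _
  have h1 : Real.exp (-a / t) - Real.exp (-b / t) ≤ Real.exp (-a / t) * ((b - a) / t) := by
    rw [hsplit]
    calc Real.exp (-a / t) - Real.exp (-a / t) * Real.exp (-((b - a) / t))
        = Real.exp (-a / t) * (1 - Real.exp (-((b - a) / t))) := by ring
      _ ≤ Real.exp (-a / t) * ((b - a) / t) := mul_le_mul_of_nonneg_left h2 h3.le
  have hxe : a / t ≤ Real.exp (a / t) := by
    have := Real.add_one_le_exp (a / t); linarith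
  have hEt : a ≤ Real.exp (a / t) * t := by
    have h4 : (a / t) * t ≤ Real.exp (a / t) * t :=
      mul_le_mul_of_nonneg_right hxe ht.le
    calc a = (a / t) * t := by field_simp
      _ ≤ Real.exp (a / t) * t := h4
  have hprod : Real.exp (-a / t) * Real.exp (a / t) = 1 := by
    rw [← Real.exp_add]; ring_nf; exact Real.exp_zero
  have key : Real.exp (-a / t) / t ≤ 1 / a := by
    rw [div_le_div_iff₀ ht ha]
    have h5 := mul_le_mul_of_nonneg_left hEt h3.le
    nlinarith
  have h6 : Real.exp (-a / t) * ((b - a) / t) ≤ (b - a) / a := by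
    have hba : 0 ≤ b - a := by linarith
    calc Real.exp (-a / t) * ((b - a) / t) = (b - a) * (Real.exp (-a / t) / t) := by ring
      _ ≤ (b - a) * (1 / a) := mul_le_mul_of_nonneg_left key hba
      _ = (b - a) / a := by ring
  linarith

/-- the asymptotic `T`-invariance of `S̃_{λ,n,t}`, uniformly in
`t > 0`, in measure. -/
theorem stmt18
    {X : Type*} [MeasurableSpace X] (μ : Measure X) (T : X → X)
    {d : ℕ} (Y : Set X) (A : Fin d → Set X)
    (hR : RaySetting μ T Y A)
    (lam : Fin d → ℝ) (hlam : ∀ i, 0 ≤ lam i) :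
    ∀ ν : Measure X, IsProbabilityMeasure ν → ν ≪ μ → ∀ ε > (0 : ℝ),
      Tendsto (fun n =>
          ν {x | ε < ⨆ t : Ioi (0 : ℝ),
            |Stilde T A lam n (t : ℝ) (T x) - Stilde T A lam n (t : ℝ) x|})
        atTop (𝓝 0) := by
  classical
  intro ν hν hνμ ε hε
  haveI : Nonempty (Ioi (0 : ℝ)) := Set.nonempty_Ioi.to_subtype
  have hind01 : ∀ (s : Set X) (y : X),
      0 ≤ s.indicator (fun _ => (1 : ℝ)) y ∧ s.indicator (fun _ => (1 : ℝ)) y ≤ 1 := by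
    intro s y; by_cases h : y ∈ s <;> simp [h]
  have hocc_nonneg : ∀ n x (i : Fin d), 0 ≤ occVec T A n x i := by
    intro n x i
    exact Finset.sum_nonneg fun k _ => (hind01 _ _).1
  by_cases hz : ∀ i, lam i = 0
  · -- degenerate case: everything is identically 1
    have hempty : ∀ n : ℕ, {x | ε < ⨆ t : Ioi (0 : ℝ),
        |Stilde T A lam n (t : ℝ) (T x) - Stilde T A lam n (t : ℝ) x|} = (∅ : Set X) := by
      intro n
      ext x
      simp only [Set.mem_setOf_eq, Set.mem_empty_iff_false, iff_false, not_lt]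
      refine ciSup_le fun t => ?_
      have h0 : ∀ y : X, Stilde T A lam n (t : ℝ) y = 1 := by
        intro y; simp [Stilde, hz]
      rw [h0, h0]
      simpa using hε.le
    simpa [hempty] using (tendsto_const_nhds :
      Tendsto (fun _ : ℕ => (0 : ℝ≥0∞)) atTop (𝓝 0))
  · push_neg at hz
    obtain ⟨i0, hi0⟩ := hz
    have hi0' : 0 < lam i0 := lt_of_le_of_ne (hlam i0) (Ne.symm hi0)
    set L : ℝ := ∑ i, lam i with hLdef
    have hL : 0 < L :=
      lt_of_lt_of_le hi0' (Finset.single_le_sum (fun i _ => hlam i) (Finset.mem_univ i0))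
    set M : ℝ := L + L / ε with hMdef
    have hLM : L < M := by
      have : 0 < L / ε := div_pos hL hε
      simp only [hMdef]; linarith
    have hTm : Measurable T := hR.ergodic.measurable
    set dot : ℕ → X → ℝ := fun n x => ∑ i, lam i * occVec T A n x i with hdotdef
    have hdot_nonneg : ∀ n x, 0 ≤ dot n x := fun n x =>
      Finset.sum_nonneg fun i _ => mul_nonneg (hlam i) (hocc_nonneg n x i)
    -- the one-step difference identity for the occupation times
    have hdiff : ∀ (n : ℕ) (x : X) (i : Fin d),
        occVec T A n (T x) i - occVec T A n x i =
        (A i).indicator (fun _ => (1 : ℝ)) (T^[n + 1] x) -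
          (A i).indicator (fun _ => (1 : ℝ)) (T^[0 + 1] x) := by
      intro n x i
      have h1 : occVec T A n (T x) i =
          ∑ k ∈ Finset.range n, (A i).indicator (fun _ => (1 : ℝ)) (T^[(k + 1) + 1] x) := by
        unfold occVec
        refine Finset.sum_congr rfl fun k _ => ?_
        rw [Function.iterate_succ_apply T (k + 1) x]
      have h2 : (∑ k ∈ Finset.range (n + 1),
            (A i).indicator (fun _ => (1 : ℝ)) (T^[k + 1] x)) =
          (∑ k ∈ Finset.range n, (A i).indicator (fun _ => (1 : ℝ)) (T^[(k + 1) + 1] x)) +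
            (A i).indicator (fun _ => (1 : ℝ)) (T^[0 + 1] x) := Finset.sum_range_succ' _ _
      have h3 : (∑ k ∈ Finset.range (n + 1),
            (A i).indicator (fun _ => (1 : ℝ)) (T^[k + 1] x)) =
          occVec T A n x i + (A i).indicator (fun _ => (1 : ℝ)) (T^[n + 1] x) :=
        Finset.sum_range_succ _ _
      rw [h1]
      rw [h3] at h2
      linarith
    -- the difference of `dot` along one step of `T` is bounded by `L`
    have hdotdiff : ∀ n x, |dot n (T x) - dot n x| ≤ L := by
      intro n x
      have hsum : dot n (T x) - dot n x =
          ∑ i, lam i * (occVec T A n (T x) i - occVec T A n x i) := by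
        simp only [hdotdef, ← Finset.sum_sub_distrib, mul_sub]
      rw [hsum]
      calc |∑ i, lam i * (occVec T A n (T x) i - occVec T A n x i)|
          ≤ ∑ i, |lam i * (occVec T A n (T x) i - occVec T A n x i)| :=
            Finset.abs_sum_le_sum_abs _ _
        _ ≤ ∑ i, lam i := by
            refine Finset.sum_le_sum fun i _ => ?_
            rw [abs_mul, abs_of_nonneg (hlam i)]
            have hd := hdiff n x i
            have b1 := hind01 (A i) (T^[n + 1] x)
            have b2 := hind01 (A i) (T^[0 + 1] x)
            have habs : |occVec T A n (T x) i - occVec T A n x i| ≤ 1 := by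
              rw [hd]
              exact abs_le.mpr ⟨by linarith, by linarith⟩
            calc lam i * |occVec T A n (T x) i - occVec T A n x i|
                ≤ lam i * 1 := mul_le_mul_of_nonneg_left habs (hlam i)
              _ = lam i := mul_one _
    -- a.e. `dot n x → ∞`
    set s : Set X := A i0 with hsdef
    have hs_meas : MeasurableSet s := hR.measA i0
    have hs_top : μ s = ⊤ := hR.infA i0
    set E : Set X := {x | ∃ᶠ n in atTop, T^[n] x ∈ s} with hEdef
    have hE_eq : E = ⋂ N, ⋃ n, ⋃ _ : N ≤ n, T^[n] ⁻¹' s := by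
      ext x
      simp only [hEdef, Set.mem_setOf_eq, Filter.frequently_atTop, Set.mem_iInter,
        Set.mem_iUnion, Set.mem_preimage, exists_prop]
    have hE_meas : MeasurableSet E := by
      rw [hE_eq]
      exact MeasurableSet.iInter fun N => MeasurableSet.iUnion fun n =>
        MeasurableSet.iUnion fun _ => (hTm.iterate n) hs_meas
    have hE_inv : T ⁻¹' E = E := by
      ext x
      simp only [Set.mem_preimage, hEdef, Set.mem_setOf_eq]
      constructor
      · intro h
        rw [frequently_atTop] at h ⊢
        intro N
        obtain ⟨n, hn, hns⟩ := h N
        exact ⟨n + 1, by omega, by rwa [Function.iterate_succ_apply]⟩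
      · intro h
        rw [frequently_atTop] at h ⊢
        intro N
        obtain ⟨n, hn, hns⟩ := h (N + 1)
        obtain ⟨m, rfl⟩ : ∃ m, n = m + 1 := ⟨n - 1, by omega⟩
        exact ⟨m, by omega, by rwa [Function.iterate_succ_apply] at hns⟩
    have hE_full : ∀ᵐ x ∂μ, x ∈ E := by
      rcases hR.ergodic.ae_empty_or_univ hE_meas hE_inv with h | h
      · exfalso
        have hμE : μ E = 0 := by rwa [ae_eq_empty] at h
        have h1 : ∀ᵐ x ∂μ, x ∈ s → ∃ᶠ n in atTop, T^[n] x ∈ s :=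
          hR.conservative.ae_mem_imp_frequently_image_mem hs_meas.nullMeasurableSet
        have hnull : μ {x | ¬(x ∈ s → x ∈ E)} = 0 := by
          rw [← ae_iff]
          exact h1
        have hsubE : s \ E ⊆ {x | ¬(x ∈ s → x ∈ E)} := fun x hx h => hx.2 (h hx.1)
        have h2 : μ (s \ E) = 0 := measure_mono_null hsubE hnull
        have h3 : μ s ≤ μ E + μ (s \ E) := by
          refine le_trans (measure_mono ?_) (measure_union_le _ _)
          intro x hx
          by_cases hxE : x ∈ E
          · exact Or.inl hxE
          · exact Or.inr ⟨hx, hxE⟩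
        rw [hμE, h2, add_zero] at h3
        rw [hs_top] at h3
        exact (by simp : ¬ (⊤ : ℝ≥0∞) ≤ 0) h3
      · have hc : μ Eᶜ = 0 := by rwa [ae_eq_univ] at h
        rw [ae_iff]
        simpa [Set.compl_def] using hc
    have haetendsto : ∀ᵐ x ∂μ, Tendsto (fun n => dot n x) atTop atTop := by
      filter_upwards [hE_full] with x hx
      have hocc_mono : Monotone (fun n => occVec T A n x i0) := by
        apply monotone_nat_of_le_succ
        intro n
        show occVec T A n x i0 ≤ occVec T A (n + 1) x i0
        unfold occVec
        rw [Finset.sum_range_succ]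
        have := (hind01 (A i0) (T^[n + 1] x)).1
        linarith
      have hfreq : ∀ N, ∃ n ≥ N, T^[n] x ∈ s := frequently_atTop.mp hx
      have hunb : ∀ m : ℕ, ∃ n, (m : ℝ) ≤ occVec T A n x i0 := by
        intro m
        induction m with
        | zero => exact ⟨0, by simpa using hocc_nonneg 0 x i0⟩
        | succ m ih =>
          obtain ⟨n, hn⟩ := ih
          obtain ⟨p, hp, hps⟩ := hfreq (n + 1)
          obtain ⟨k, rfl⟩ : ∃ k, p = k + 1 := ⟨p - 1, by omega⟩
          refine ⟨k + 1, ?_⟩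
          have h1 : occVec T A (k + 1) x i0 =
              occVec T A k x i0 + (A i0).indicator (fun _ => (1 : ℝ)) (T^[k + 1] x) :=
            Finset.sum_range_succ _ _
          have h2 : (A i0).indicator (fun _ => (1 : ℝ)) (T^[k + 1] x) = 1 :=
            Set.indicator_of_mem hps _
          have h3 : occVec T A n x i0 ≤ occVec T A k x i0 := hocc_mono (by omega)
          push_cast
          rw [h1, h2]
          linarith
      have hocc_tendsto : Tendsto (fun n => occVec T A n x i0) atTop atTop :=
        tendsto_atTop_atTop_of_monotone hocc_mono (fun b => by
          obtain ⟨n, hn⟩ := hunb ⌈b⌉₊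
          exact ⟨n, (Nat.le_ceil b).trans hn⟩)
      have hdot_ge : ∀ n, lam i0 * occVec T A n x i0 ≤ dot n x := fun n =>
        Finset.single_le_sum (fun i _ => mul_nonneg (hlam i) (hocc_nonneg n x i))
          (Finset.mem_univ i0)
      exact tendsto_atTop_mono hdot_ge (hocc_tendsto.const_mul_atTop hi0')
    -- the containment of the bad set
    have hkey : ∀ n : ℕ, {x | ε < ⨆ t : Ioi (0 : ℝ),
        |Stilde T A lam n (t : ℝ) (T x) - Stilde T A lam n (t : ℝ) x|} ⊆
        {x | dot n x < M} := by
      intro n x hx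
      simp only [Set.mem_setOf_eq] at hx ⊢
      by_contra hM
      push_neg at hM
      have hSt : ∀ (t : ℝ) (y : X), Stilde T A lam n t y = Real.exp (-(dot n y) / t) := by
        intro t y; rfl
      have hbdd : BddAbove (Set.range fun t : Ioi (0 : ℝ) =>
          |Stilde T A lam n (t : ℝ) (T x) - Stilde T A lam n (t : ℝ) x|) := by
        refine ⟨2, ?_⟩
        rintro y ⟨t, rfl⟩
        have ht : (0 : ℝ) < t := t.2
        have hb : ∀ z : X, 0 < Stilde T A lam n (t : ℝ) z ∧
            Stilde T A lam n (t : ℝ) z ≤ 1 := by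
          intro z
          rw [hSt]
          refine ⟨Real.exp_pos _, Real.exp_le_one_iff.mpr ?_⟩
          apply div_nonpos_of_nonpos_of_nonneg (by linarith [hdot_nonneg n z]) ht.le
        have h1 := hb (T x)
        have h2 := hb x
        rw [abs_le]
        constructor <;> linarith [h1.1, h1.2, h2.1, h2.2]
      obtain ⟨t, ht⟩ := (lt_ciSup_iff hbdd).mp hx
      have htpos : (0 : ℝ) < t := t.2
      set a : ℝ := dot n x with hadef
      set b : ℝ := dot n (T x) with hbdef
      have hab : |b - a| ≤ L := hdotdiff n x
      have haL : L < a := lt_of_lt_of_le hLM hM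
      have hbound : |Stilde T A lam n (t : ℝ) (T x) - Stilde T A lam n (t : ℝ) x| ≤
          L / (a - L) := by
        rw [hSt, hSt]
        rcases le_or_gt a b with hcase | hcase
        · have h := stmt18_exp_diff_le (by linarith : (0 : ℝ) < a) hcase htpos
          refine h.trans ?_
          apply div_le_div₀ hL.le (by cases abs_le.mp hab; linarith) (by linarith) (by linarith)
        · rw [abs_sub_comm]
          have hbpos : 0 < b := by cases abs_le.mp hab; linarith
          have h := stmt18_exp_diff_le hbpos hcase.le htpos
          refine h.trans ?_
          apply div_le_div₀ hL.le (by cases abs_le.mp hab; linarith) (by linarith)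
            (by cases abs_le.mp hab; linarith)
      have hfin : L / (a - L) ≤ ε := by
        have hq : L / ε ≤ a - L := by
          have : M ≤ a := hM
          simp only [hMdef] at this
          linarith
        have h5 : L / (a - L) ≤ L / (L / ε) :=
          div_le_div_of_nonneg_left hL.le (div_pos hL hε) hq
        have h6 : L / (L / ε) = ε := by field_simp
        linarith
      linarith
    -- measurability
    have hmeas_dot : ∀ n, Measurable (dot n) := by
      intro n
      apply Finset.measurable_sum
      intro i _
      apply Measurable.const_mul
      apply Finset.measurable_sum
      intro k _
      exact (measurable_const.indicator (hR.measA i)).comp (hTm.iterate (k + 1))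
    have hsetmeas : ∀ n, MeasurableSet {x | dot n x < M} :=
      fun n => measurableSet_lt (hmeas_dot n) measurable_const
    -- convergence of the dominating measures
    have hν_tend : Tendsto (fun n => ν {x | dot n x < M}) atTop (𝓝 0) := by
      have haeν : ∀ᵐ x ∂ν, Tendsto (fun n => dot n x) atTop atTop :=
        hνμ.ae_le haetendsto
      have heq : ∀ n, ν {x | dot n x < M} =
          ∫⁻ x, ({x | dot n x < M}).indicator (fun _ => (1 : ℝ≥0∞)) x ∂ν :=
        fun n => (lintegral_indicator_one (hsetmeas n)).symm
      have hlim : Tendsto (fun n =>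
          ∫⁻ x, ({x | dot n x < M}).indicator (fun _ => (1 : ℝ≥0∞)) x ∂ν) atTop
          (𝓝 (∫⁻ _, (0 : ℝ≥0∞) ∂ν)) := by
        apply tendsto_lintegral_of_dominated_convergence (fun _ => (1 : ℝ≥0∞))
        · exact fun n => measurable_const.indicator (hsetmeas n)
        · intro n
          filter_upwards with x
          by_cases hx : x ∈ {x | dot n x < M} <;> simp [hx]
        · simp
        · filter_upwards [haeν] with x hx
          have hev : ∀ᶠ n in atTop, M ≤ dot n x := hx.eventually_ge_atTop M
          refine Tendsto.congr' ?_ tendsto_const_nhds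
          filter_upwards [hev] with n hn
          exact (Set.indicator_of_notMem (by simp only [Set.mem_setOf_eq, not_lt]; exact hn) _).symm
      simp only [lintegral_zero] at hlim
      simpa [← heq] using hlim
    refine tendsto_of_tendsto_of_tendsto_of_le_of_le tendsto_const_nhds hν_tend
      (fun n => zero_le) (fun n => measure_mono (hkey n))

end
end
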